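/- arXiv:1907.04851 — 2 statements merged into one kernel-verified Lean document; each statement's English description precedes it below -/
import Mathlib

section
/- Let B ∈ ℝ³ with ‖B‖ = b > 0, let n = B/b, let ε > 0 and v₀ ∈ ℝ³. Define v : ℝ → ℝ³ by v(t) = cos(b t/ε) v₀ + (1 − cos(b t/ε)) ⟨n, v₀⟩ n + sin(b t/ε) (v₀ × n). Then v(0) = v₀ and, for every t ∈ ℝ, v is differentiable at t with v'(t) = (1/ε) (v(t) × B). (Rodrigues' formula for the characteristics of the stiff part of the Vlasov equation; the position component x(t) = x(0) is constant.) -/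
open RealInnerProductSpace

/-- Three-dimensional cross product on `EuclideanSpace ℝ (Fin 3)`. -/
noncomputable def cross3 (u v : EuclideanSpace ℝ (Fin 3)) : EuclideanSpace ℝ (Fin 3) :=
  WithLp.toLp 2 (crossProduct (fun i => u i) (fun i => v i))

lemma cross3_apply (u v : EuclideanSpace ℝ (Fin 3)) (i : Fin 3) :
    cross3 u v i = ![u 1 * v 2 - u 2 * v 1, u 2 * v 0 - u 0 * v 2,
      u 0 * v 1 - u 1 * v 0] i := by
  have : cross3 u v = ![u 1 * v 2 - u 2 * v 1, u 2 * v 0 - u 0 * v 2,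
      u 0 * v 1 - u 1 * v 0] := cross_apply (fun i => u i) (fun i => v i)
  rw [this]

/-- Rodrigues' formula solves the stiff part `v' = (1/ε) v × B` of the Vlasov
characteristics when `‖B‖ = b > 0`, with `n = B / b`. -/
theorem rodrigues_formula_solves_stiff_part
    (B : EuclideanSpace ℝ (Fin 3)) (b : ℝ) (hb : 0 < b) (hB : ‖B‖ = b)
    (ε : ℝ) (hε : 0 < ε) (v₀ : EuclideanSpace ℝ (Fin 3))
    (n : EuclideanSpace ℝ (Fin 3)) (hn : n = b⁻¹ • B)
    (v : ℝ → EuclideanSpace ℝ (Fin 3))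
    (hv : ∀ t : ℝ, v t =
      Real.cos (b * t / ε) • v₀ + (1 - Real.cos (b * t / ε)) • (⟪n, v₀⟫ • n)
        + Real.sin (b * t / ε) • cross3 v₀ n) :
    v 0 = v₀ ∧ ∀ t : ℝ, HasDerivAt v ((1 / ε) • cross3 (v t) B) t := by
  have hn1 : n 0 ^ 2 + n 1 ^ 2 + n 2 ^ 2 = 1 := by
    have h2 : ‖B‖ ^ 2 = b ^ 2 := by rw [hB]
    rw [EuclideanSpace.norm_eq] at h2
    rw [Real.sq_sqrt (by positivity)] at h2
    rw [Fin.sum_univ_three] at h2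
    simp only [Real.norm_eq_abs, sq_abs] at h2
    have : n 0 = b⁻¹ * B 0 ∧ n 1 = b⁻¹ * B 1 ∧ n 2 = b⁻¹ * B 2 := by
      refine ⟨?_, ?_, ?_⟩ <;> rw [hn] <;> rfl
    obtain ⟨e0, e1, e2⟩ := this
    have hb' : b ≠ 0 := ne_of_gt hb
    rw [e0, e1, e2]
    field_simp
    nlinarith [h2]
  have hBn : ∀ i, B i = b * n i := by
    intro i
    rw [hn]
    simp [PiLp.smul_apply, smul_eq_mul]
    field_simp
  constructor
  · rw [hv 0]
    simp
  · intro t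
    -- derivative of the scalar coefficients
    have hbt : ∀ s : ℝ, HasDerivAt (fun u : ℝ => b * u / ε) (b / ε) s := by
      intro s
      simpa using ((hasDerivAt_id s).const_mul b).div_const ε
    have hcos : HasDerivAt (fun u : ℝ => Real.cos (b * u / ε))
        (-Real.sin (b * t / ε) * (b / ε)) t :=
      (Real.hasDerivAt_cos _).comp t (hbt t)
    have hsin : HasDerivAt (fun u : ℝ => Real.sin (b * u / ε))
        (Real.cos (b * t / ε) * (b / ε)) t :=
      (Real.hasDerivAt_sin _).comp t (hbt t)
    have h1cos : HasDerivAt (fun u : ℝ => 1 - Real.cos (b * u / ε))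
        (Real.sin (b * t / ε) * (b / ε)) t := by
      have := hcos.const_sub (1:ℝ)
      simp only [neg_mul, neg_neg] at this
      exact this
    have hD : HasDerivAt (fun u : ℝ =>
        Real.cos (b * u / ε) • v₀ + (1 - Real.cos (b * u / ε)) • (⟪n, v₀⟫ • n)
          + Real.sin (b * u / ε) • cross3 v₀ n)
        ((-Real.sin (b * t / ε) * (b / ε)) • v₀
          + (Real.sin (b * t / ε) * (b / ε)) • (⟪n, v₀⟫ • n)
          + (Real.cos (b * t / ε) * (b / ε)) • cross3 v₀ n) t :=
      ((hcos.smul_const v₀).add (h1cos.smul_const _)).add (hsin.smul_const _)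
    have hveq : v = fun u : ℝ =>
        Real.cos (b * u / ε) • v₀ + (1 - Real.cos (b * u / ε)) • (⟪n, v₀⟫ • n)
          + Real.sin (b * u / ε) • cross3 v₀ n := funext hv
    have hip : ⟪n, v₀⟫ = n 0 * v₀ 0 + n 1 * v₀ 1 + n 2 * v₀ 2 := by
      rw [PiLp.inner_apply, Fin.sum_univ_three]
      simp [RCLike.inner_apply, mul_comm]
    have key : (1 / ε) • cross3 (v t) B =
        (-Real.sin (b * t / ε) * (b / ε)) • v₀
          + (Real.sin (b * t / ε) * (b / ε)) • (⟪n, v₀⟫ • n)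
          + (Real.cos (b * t / ε) * (b / ε)) • cross3 v₀ n := by
      rw [hv t]
      apply PiLp.ext
      intro i
      simp only [PiLp.add_apply, PiLp.smul_apply, smul_eq_mul, cross3_apply, hip, hBn]
      have hε' : ε ≠ 0 := ne_of_gt hε
      fin_cases i
      · simp only [Fin.zero_eta, Fin.mk_one, Fin.reduceFinMk, Matrix.cons_val_zero,
          Matrix.cons_val_one, Matrix.head_cons, Matrix.cons_val_two, Matrix.tail_cons,
          Fin.isValue]
        linear_combination (-(b / ε) * Real.sin (b * t / ε) * v₀ 0) * hn1
      · simp only [Fin.zero_eta, Fin.mk_one, Fin.reduceFinMk, Matrix.cons_val_zero,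
          Matrix.cons_val_one, Matrix.head_cons, Matrix.cons_val_two, Matrix.tail_cons,
          Fin.isValue]
        linear_combination (-(b / ε) * Real.sin (b * t / ε) * v₀ 1) * hn1
      · simp only [Fin.zero_eta, Fin.mk_one, Fin.reduceFinMk, Matrix.cons_val_zero,
          Matrix.cons_val_one, Matrix.head_cons, Matrix.cons_val_two, Matrix.tail_cons,
          Fin.isValue]
        linear_combination (-(b / ε) * Real.sin (b * t / ε) * v₀ 2) * hn1
    rw [key, hveq]
    exact hD
end

section
/- Let B, E ∈ ℝ³ with ‖B‖ = 1, let c ∈ ℝ and v₀ ∈ ℝ³. Define v : ℝ → ℝ³ by v(t) = (cos t) v₀ + (sin t) (v₀ × B) + c (sin t) E + c (t − sin t) ⟨B, E⟩ B + c (1 − cos t) (E × B) + (1 − cos t) ⟨B, v₀⟩ B. Then v(0) = v₀ and, for every t ∈ ℝ, v'(t) = c E + v(t) × B. (Exact flow of the velocity substep E^v_α, with c = αH, used in the splitting scheme of the multi-revolution composition method.) -/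
open RealInnerProductSpace

/-- Exact flow of the velocity substep `v' = c E + v × B` (with `c = αH`) used in the
splitting scheme of the multi-revolution composition method. -/
theorem velocity_substep_exact_flow
    (B E : EuclideanSpace ℝ (Fin 3)) (hB : ‖B‖ = 1)
    (c : ℝ) (v₀ : EuclideanSpace ℝ (Fin 3))
    (v : ℝ → EuclideanSpace ℝ (Fin 3))
    (hv : ∀ t : ℝ, v t =
      Real.cos t • v₀ + Real.sin t • cross3 v₀ B + (c * Real.sin t) • E
        + (c * (t - Real.sin t)) • (⟪B, E⟫ • B) + (c * (1 - Real.cos t)) • cross3 E B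
        + (1 - Real.cos t) • (⟪B, v₀⟫ • B)) :
    v 0 = v₀ ∧ ∀ t : ℝ, HasDerivAt v (c • E + cross3 (v t) B) t := by
  have hB2 : B 0 ^ 2 + B 1 ^ 2 + B 2 ^ 2 = 1 := by
    have := real_inner_self_eq_norm_sq B
    rw [hB] at this
    simp only [PiLp.inner_apply, Fin.sum_univ_three, RCLike.inner_apply, conj_trivial] at this
    linarith
  constructor
  · simp [hv 0]
  · intro t
    have h1 : HasDerivAt v
        ((-Real.sin t) • v₀ + Real.cos t • cross3 v₀ B + (c * Real.cos t) • E
          + (c * (1 - Real.cos t)) • (⟪B, E⟫ • B) + (c * Real.sin t) • cross3 E B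
          + Real.sin t • (⟪B, v₀⟫ • B)) t := by
      apply HasDerivAt.congr_of_eventuallyEq _ (Filter.Eventually.of_forall hv)
      exact ((((((Real.hasDerivAt_cos t).smul_const v₀).add
        ((Real.hasDerivAt_sin t).smul_const (cross3 v₀ B))).add
        (((hasDerivAt_const t c).mul (Real.hasDerivAt_sin t)).smul_const E)).add
        (((hasDerivAt_const t c).mul ((hasDerivAt_id t).sub (Real.hasDerivAt_sin t))).smul_const
          (⟪B, E⟫ • B))).add
        (((hasDerivAt_const t c).mul ((hasDerivAt_const t (1:ℝ)).sub (Real.hasDerivAt_cos t))).smul_const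
          (cross3 E B))).add
        (((hasDerivAt_const t (1:ℝ)).sub (Real.hasDerivAt_cos t)).smul_const (⟪B, v₀⟫ • B))
        |>.congr_deriv (by module)
    convert h1 using 1
    rw [hv t]
    ext i
    fin_cases i <;>
      simp [cross3, crossProduct, PiLp.inner_apply, Fin.sum_univ_three]
    · linear_combination (c * E 0 * (Real.cos t - 1) - Real.sin t * v₀ 0) * hB2
    · linear_combination (c * E 1 * (Real.cos t - 1) - Real.sin t * v₀ 1) * hB2
    · linear_combination (c * E 2 * (Real.cos t - 1) - Real.sin t * v₀ 2) * hB2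
end
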